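/- For every shape parameter λ > 0 and every x > 0 with λx > φ(λx), the Mills ratio of the skew normal distribution satisfies the upper bound (1 - F_λ(x)) / f_λ(x) < x^{-1} (1 - φ(λx)/(λx))^{-1}. -/

import Mathlib

open Real MeasureTheory Filter Topology

/-- Standard normal density. -/
noncomputable def stdPhi (x : ℝ) : ℝ := (Real.sqrt (2 * Real.pi))⁻¹ * Real.exp (-(x ^ 2) / 2)

/-- Standard normal cdf. -/
noncomputable def stdCdf (x : ℝ) : ℝ := ∫ t in Set.Iic x, stdPhi t

/-- Skew normal density with shape parameter l. -/
noncomputable def snPdf (l x : ℝ) : ℝ := 2 * stdPhi x * stdCdf (l * x)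

/-- Skew normal cdf with shape parameter l. -/
noncomputable def snCdf (l x : ℝ) : ℝ := ∫ t in Set.Iic x, snPdf l t

/-- Gumbel extreme value distribution function. -/
noncomputable def gumbel (x : ℝ) : ℝ := Real.exp (-Real.exp (-x))

lemma stdPhi_eq (t : ℝ) : stdPhi t = (Real.sqrt (2 * Real.pi))⁻¹ * Real.exp (-(1/2) * t ^ 2) := by
  rw [stdPhi]; ring_nf

lemma stdPhi_pos (t : ℝ) : 0 < stdPhi t := by
  apply mul_pos (inv_pos.2 (Real.sqrt_pos.2 (by positivity))) (Real.exp_pos _)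

lemma continuous_stdPhi : Continuous stdPhi := by
  unfold stdPhi; fun_prop

lemma integrable_stdPhi : Integrable stdPhi := by
  simp only [funext stdPhi_eq]
  exact (integrable_exp_neg_mul_sq (by norm_num : (0:ℝ) < 1/2)).const_mul _

lemma integral_stdPhi : ∫ t, stdPhi t = 1 := by
  simp only [funext stdPhi_eq]
  rw [MeasureTheory.integral_const_mul]
  rw [show (fun a : ℝ => Real.exp (-(1/2) * a ^ 2)) = fun a : ℝ => Real.exp (-(1/2 : ℝ) * a ^ 2) from rfl]
  rw [integral_gaussian (1/2 : ℝ)]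
  rw [inv_mul_eq_div, div_eq_one_iff_eq (by positivity)]
  rw [show Real.pi / (1/2) = 2 * Real.pi by ring]

lemma stdPhi_even (t : ℝ) : stdPhi (-t) = stdPhi t := by simp [stdPhi]

lemma hasDerivAt_stdPhi (t : ℝ) : HasDerivAt stdPhi (-t * stdPhi t) t := by
  have h : HasDerivAt (fun u : ℝ => -(u ^ 2) / 2) (-t) t := by
    have := ((hasDerivAt_pow 2 t).neg).div_const 2
    simpa using this.congr_deriv (by ring)
  have := (h.exp).const_mul ((Real.sqrt (2 * Real.pi))⁻¹)
  unfold stdPhi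
  refine this.congr_deriv ?_
  ring

lemma stdCdf_nonneg (u : ℝ) : 0 ≤ stdCdf u :=
  setIntegral_nonneg measurableSet_Iic (fun t _ => (stdPhi_pos t).le)

lemma stdCdf_le_one (u : ℝ) : stdCdf u ≤ 1 := by
  rw [← integral_stdPhi]
  exact setIntegral_le_integral integrable_stdPhi (Filter.Eventually.of_forall fun t => (stdPhi_pos t).le)

lemma monotone_stdCdf : Monotone stdCdf := fun a b hab =>
  setIntegral_mono_set integrable_stdPhi.integrableOn
    (Filter.Eventually.of_forall fun t => (stdPhi_pos t).le)
    (HasSubset.Subset.eventuallyLE (Set.Iic_subset_Iic.2 hab))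

lemma measurable_stdCdf : Measurable stdCdf := monotone_stdCdf.measurable

lemma hasDerivAt_stdCdf (u : ℝ) : HasDerivAt stdCdf (stdPhi u) u := by
  have heq : ∀ v : ℝ, stdCdf v = stdCdf 0 + ∫ t in (0:ℝ)..v, stdPhi t := by
    intro v
    unfold stdCdf
    rw [← intervalIntegral.integral_Iic_sub_Iic integrable_stdPhi.integrableOn
      integrable_stdPhi.integrableOn]
    ring
  have h : HasDerivAt (fun v => ∫ t in (0:ℝ)..v, stdPhi t) (stdPhi u) u :=
    intervalIntegral.integral_hasDerivAt_right
      (integrable_stdPhi.intervalIntegrable)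
      (continuous_stdPhi.stronglyMeasurableAtFilter _ _)
      continuous_stdPhi.continuousAt
  exact (funext heq : stdCdf = _) ▸ (h.const_add (stdCdf 0))

lemma stdCdf_neg (u : ℝ) : stdCdf (-u) = 1 - stdCdf u := by
  have h1 : stdCdf (-u) = ∫ t in Set.Ioi u, stdPhi t := by
    have h0 := integral_comp_neg_Iic (-u) stdPhi
    rw [neg_neg] at h0
    rw [← h0]
    unfold stdCdf
    exact (setIntegral_congr_fun measurableSet_Iic fun t _ => (stdPhi_even t).symm)
  have h2 : (∫ t in Set.Iic u, stdPhi t) + ∫ t in Set.Ioi u, stdPhi t = 1 := by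
    rw [← Set.compl_Iic, integral_add_compl measurableSet_Iic integrable_stdPhi, integral_stdPhi]
  rw [h1]
  unfold stdCdf
  linarith

lemma tendsto_expSq {c : ℝ} (hc : 0 < c) :
    Tendsto (fun t : ℝ => Real.exp (-c * t ^ 2)) atTop (𝓝 0) := by
  apply Real.tendsto_exp_atBot.comp
  have h2 : Tendsto (fun t : ℝ => t ^ 2) atTop atTop := tendsto_pow_atTop (by norm_num)
  exact h2.const_mul_atTop_of_neg (by linarith)

lemma hasDerivAt_negExpSq (c t : ℝ) (hc : 0 < c) :
    HasDerivAt (fun u : ℝ => -(2 * c)⁻¹ * Real.exp (-c * u ^ 2))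
      (t * Real.exp (-c * t ^ 2)) t := by
  have h : HasDerivAt (fun u : ℝ => -c * u ^ 2) (-c * (2 * t)) t := by
    simpa using ((hasDerivAt_pow 2 t).const_mul (-c))
  have := (h.exp).const_mul (-(2 * c)⁻¹)
  refine this.congr_deriv ?_
  field_simp

lemma integrableOn_t_exp (c x : ℝ) (hc : 0 < c) (hx : 0 < x) :
    IntegrableOn (fun t => t * Real.exp (-c * t ^ 2)) (Set.Ioi x) := by
  refine integrableOn_Ioi_deriv_of_nonneg' (l := 0) (g := fun u : ℝ => -(2 * c)⁻¹ * Real.exp (-c * u ^ 2))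
    (fun t _ => hasDerivAt_negExpSq c t hc) (fun t ht => ?_) ?_
  · exact mul_nonneg (le_of_lt (hx.trans ht)) (Real.exp_pos _).le
  · simpa using (tendsto_expSq hc).const_mul (-(2 * c)⁻¹)

lemma integral_t_exp (c x : ℝ) (hc : 0 < c) (hx : 0 < x) :
    ∫ t in Set.Ioi x, t * Real.exp (-c * t ^ 2) = (2 * c)⁻¹ * Real.exp (-c * x ^ 2) := by
  rw [integral_Ioi_of_hasDerivAt_of_nonneg' (g := fun u : ℝ => -(2 * c)⁻¹ * Real.exp (-c * u ^ 2))
    (fun t _ => hasDerivAt_negExpSq c t hc)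
    (fun t ht => mul_nonneg (le_of_lt (hx.trans ht)) (Real.exp_pos _).le)
    (by simpa using (tendsto_expSq hc).const_mul (-(2 * c)⁻¹))]
  ring

lemma integral_exp_le (c x : ℝ) (hc : 0 < c) (hx : 0 < x) :
    ∫ t in Set.Ioi x, Real.exp (-c * t ^ 2) ≤ (2 * c * x)⁻¹ * Real.exp (-c * x ^ 2) := by
  have h1 : ∫ t in Set.Ioi x, Real.exp (-c * t ^ 2)
      ≤ ∫ t in Set.Ioi x, x⁻¹ * (t * Real.exp (-c * t ^ 2)) := by
    apply setIntegral_mono_on (integrable_exp_neg_mul_sq hc).integrableOn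
      ((integrableOn_t_exp c x hc hx).const_mul _) measurableSet_Ioi
    intro t ht
    rw [Set.mem_Ioi] at ht
    rw [show x⁻¹ * (t * Real.exp (-c * t ^ 2)) = (x⁻¹ * t) * Real.exp (-c * t ^ 2) by ring]
    nth_rewrite 1 [← one_mul (Real.exp (-c * t ^ 2))]
    apply mul_le_mul_of_nonneg_right _ (Real.exp_pos _).le
    rw [← div_eq_inv_mul, le_div_iff₀ hx]
    linarith
  calc ∫ t in Set.Ioi x, Real.exp (-c * t ^ 2)
      ≤ ∫ t in Set.Ioi x, x⁻¹ * (t * Real.exp (-c * t ^ 2)) := h1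
    _ = x⁻¹ * ∫ t in Set.Ioi x, t * Real.exp (-c * t ^ 2) := MeasureTheory.integral_const_mul _ _
    _ = (2 * c * x)⁻¹ * Real.exp (-c * x ^ 2) := by
        rw [integral_t_exp c x hc hx]; field_simp

lemma mills (y : ℝ) (hy : 0 < y) : 1 - stdCdf y ≤ stdPhi y / y := by
  have h2 : stdCdf y + ∫ t in Set.Ioi y, stdPhi t = 1 := by
    rw [← Set.compl_Iic]
    unfold stdCdf
    rw [integral_add_compl measurableSet_Iic integrable_stdPhi, integral_stdPhi]
  have h3 : (∫ t in Set.Ioi y, stdPhi t) ≤ stdPhi y / y := by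
    calc (∫ t in Set.Ioi y, stdPhi t)
        = (Real.sqrt (2 * Real.pi))⁻¹ * ∫ t in Set.Ioi y, Real.exp (-(1/2) * t ^ 2) := by
          simp only [funext stdPhi_eq]; exact MeasureTheory.integral_const_mul _ _
      _ ≤ (Real.sqrt (2 * Real.pi))⁻¹ * ((2 * (1/2) * y)⁻¹ * Real.exp (-(1/2) * y ^ 2)) := by
          apply mul_le_mul_of_nonneg_left (integral_exp_le (1/2) y (by norm_num) hy)
          positivity
      _ = stdPhi y / y := by rw [stdPhi_eq]; field_simp
  linarith

lemma snPdf_nonneg (l t : ℝ) : 0 ≤ snPdf l t :=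
  mul_nonneg (mul_nonneg two_pos.le (stdPhi_pos t).le) (stdCdf_nonneg _)

lemma snPdf_le (l t : ℝ) : snPdf l t ≤ 2 * stdPhi t := by
  unfold snPdf
  calc 2 * stdPhi t * stdCdf (l * t) ≤ 2 * stdPhi t * 1 := by
        apply mul_le_mul_of_nonneg_left (stdCdf_le_one _) (mul_nonneg two_pos.le (stdPhi_pos t).le)
    _ = 2 * stdPhi t := mul_one _

lemma measurable_snPdf (l : ℝ) : Measurable (snPdf l) := by
  apply ((continuous_stdPhi.measurable.const_mul 2).mul
    (measurable_stdCdf.comp (measurable_id.const_mul l)))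

lemma integrable_snPdf (l : ℝ) : Integrable (snPdf l) := by
  apply (integrable_stdPhi.const_mul 2).mono' (measurable_snPdf l).aestronglyMeasurable
  apply Filter.Eventually.of_forall
  intro t
  rw [Real.norm_eq_abs, abs_of_nonneg (snPdf_nonneg l t)]
  exact snPdf_le l t

lemma integral_snPdf (l : ℝ) : ∫ t, snPdf l t = 1 := by
  have hneg : (∫ t, snPdf l (-t)) = ∫ t, snPdf l t := integral_neg_eq_self (snPdf l) volume
  have heq : ∀ t : ℝ, snPdf l (-t) = 2 * stdPhi t - snPdf l t := by
    intro t
    unfold snPdf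
    rw [mul_neg, stdCdf_neg, stdPhi_even]
    ring
  simp only [heq] at hneg
  rw [integral_sub ((integrable_stdPhi.const_mul 2)) (integrable_snPdf l)] at hneg
  rw [MeasureTheory.integral_const_mul, integral_stdPhi] at hneg
  linarith

lemma tendsto_snPdf_atTop (l : ℝ) : Tendsto (snPdf l) atTop (𝓝 0) := by
  have hb : Tendsto (fun t : ℝ => 2 * stdPhi t) atTop (𝓝 0) := by
    simp only [funext stdPhi_eq]
    have := ((tendsto_expSq (show (0:ℝ) < 1/2 by norm_num)).const_mul
      (2 * (Real.sqrt (2 * Real.pi))⁻¹))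
    rw [mul_zero] at this
    convert this using 2
    ring
  exact tendsto_of_tendsto_of_tendsto_of_le_of_le tendsto_const_nhds hb
    (fun t => snPdf_nonneg l t) (fun t => snPdf_le l t)

lemma phi_mul_phi (l t : ℝ) :
    stdPhi t * stdPhi (l * t) = (2 * Real.pi)⁻¹ * Real.exp (-((1 + l ^ 2) / 2) * t ^ 2) := by
  unfold stdPhi
  have h : (Real.sqrt (2 * Real.pi))⁻¹ * (Real.sqrt (2 * Real.pi))⁻¹ = (2 * Real.pi)⁻¹ := by
    rw [← mul_inv, Real.mul_self_sqrt (by positivity)]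
  rw [show (Real.sqrt (2 * Real.pi))⁻¹ * Real.exp (-t ^ 2 / 2) *
      ((Real.sqrt (2 * Real.pi))⁻¹ * Real.exp (-(l * t) ^ 2 / 2))
      = ((Real.sqrt (2 * Real.pi))⁻¹ * (Real.sqrt (2 * Real.pi))⁻¹) *
        (Real.exp (-t ^ 2 / 2) * Real.exp (-(l * t) ^ 2 / 2)) from by ring, h, ← Real.exp_add]
  congr 1
  ring

lemma hasDerivAt_negSnPdf (l t : ℝ) :
    HasDerivAt (fun u => -snPdf l u)
      (t * snPdf l t - 2 * l * stdPhi t * stdPhi (l * t)) t := by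
  have h2 : HasDerivAt (fun u : ℝ => stdCdf (l * u)) (stdPhi (l * t) * (l * 1)) t :=
    (hasDerivAt_stdCdf (l * t)).comp t ((hasDerivAt_id t).const_mul l)
  have h3 := ((((hasDerivAt_stdPhi t)).const_mul (2:ℝ)).mul h2).neg
  unfold snPdf
  refine h3.congr_deriv ?_
  ring

lemma integrableOn_phiphi (l x : ℝ) (hl : 0 < l) :
    IntegrableOn (fun t => 2 * l * stdPhi t * stdPhi (l * t)) (Set.Ioi x) := by
  have hre : ∀ t : ℝ, 2 * l * stdPhi t * stdPhi (l * t)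
      = (2 * l * (2 * Real.pi)⁻¹) * Real.exp (-((1 + l ^ 2) / 2) * t ^ 2) := fun t => by
    rw [mul_assoc, phi_mul_phi]; ring
  simp only [hre]
  exact ((integrable_exp_neg_mul_sq (by positivity)).integrableOn).const_mul _

lemma integrableOn_t_snPdf (l x : ℝ) (hx : 0 < x) :
    IntegrableOn (fun t => t * snPdf l t) (Set.Ioi x) := by
  apply Integrable.mono' (g := fun t => (2 * (Real.sqrt (2 * Real.pi))⁻¹) *
      (t * Real.exp (-(1/2) * t ^ 2)))
    (((integrableOn_t_exp (1/2) x (by norm_num) hx)).const_mul _)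
    ((measurable_id.mul (measurable_snPdf l)).aestronglyMeasurable.restrict)
  rw [MeasureTheory.ae_restrict_iff' measurableSet_Ioi]
  apply Filter.Eventually.of_forall
  intro t ht
  rw [Set.mem_Ioi] at ht
  have ht0 : 0 < t := hx.trans ht
  simp only [Pi.mul_apply, id]
  rw [Real.norm_eq_abs, abs_of_nonneg (mul_nonneg ht0.le (snPdf_nonneg l t))]
  calc t * snPdf l t ≤ t * (2 * stdPhi t) :=
        mul_le_mul_of_nonneg_left (snPdf_le l t) ht0.le
    _ = 2 * (Real.sqrt (2 * Real.pi))⁻¹ * (t * Real.exp (-(1/2) * t ^ 2)) := by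
        rw [stdPhi_eq]; ring

lemma integral_t_snPdf (l x : ℝ) (hl : 0 < l) (hx : 0 < x) :
    ∫ t in Set.Ioi x, t * snPdf l t
      = snPdf l x + ∫ t in Set.Ioi x, 2 * l * stdPhi t * stdPhi (l * t) := by
  have htend : Tendsto (fun u => -snPdf l u) atTop (𝓝 0) := by
    have := (tendsto_snPdf_atTop l).neg
    rwa [neg_zero] at this
  have key := integral_Ioi_of_hasDerivAt_of_tendsto' (a := x)
    (f := fun u => -snPdf l u)
    (f' := fun t => t * snPdf l t - 2 * l * stdPhi t * stdPhi (l * t))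
    (fun t _ => hasDerivAt_negSnPdf l t)
    ((integrableOn_t_snPdf l x hx).sub (integrableOn_phiphi l x hl))
    htend
  simp only [neg_neg, zero_sub] at key
  rw [integral_sub (integrableOn_t_snPdf l x hx) (integrableOn_phiphi l x hl)] at key
  linarith

theorem skew_normal_mills_upper_pos (l : ℝ) (hl : 0 < l) (x : ℝ) (hx : 0 < x)
    (hphix : stdPhi (l * x) < l * x) :
    (1 - snCdf l x) / snPdf l x < x⁻¹ * (1 - stdPhi (l * x) / (l * x))⁻¹ := by
  have hy0 : 0 < l * x := mul_pos hl hx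
  set q : ℝ := stdPhi (l * x) / (l * x) with hq
  have hq1 : q < 1 := (div_lt_one hy0).2 hphix
  have hq0 : 0 < q := div_pos (stdPhi_pos _) hy0
  have hPhiy : 1 - q ≤ stdCdf (l * x) := by have := mills (l * x) hy0; linarith
  have hPhiy0 : 0 < stdCdf (l * x) := lt_of_lt_of_le (by linarith) hPhiy
  have hfx : 0 < snPdf l x :=
    mul_pos (mul_pos two_pos (stdPhi_pos x)) hPhiy0
  -- tail integral
  set A : ℝ := ∫ t in Set.Ioi x, snPdf l t with hAdef
  have hA : 1 - snCdf l x = A := by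
    have h := integral_add_compl (measurableSet_Iic (a := x)) (integrable_snPdf l)
    rw [Set.compl_Iic, integral_snPdf] at h
    unfold snCdf
    rw [hAdef]
    linarith [h]
  have hA0 : 0 ≤ A := setIntegral_nonneg measurableSet_Ioi (fun t _ => snPdf_nonneg l t)
  -- step B
  have hB : x * A ≤ ∫ t in Set.Ioi x, t * snPdf l t := by
    rw [hAdef, ← MeasureTheory.integral_const_mul]
    apply setIntegral_mono_on ((integrable_snPdf l).integrableOn.const_mul x)
      (integrableOn_t_snPdf l x hx) measurableSet_Ioi
    intro t ht
    exact mul_le_mul_of_nonneg_right (Set.mem_Ioi.mp ht).le (snPdf_nonneg l t)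
  -- step C
  have hC := integral_t_snPdf l x hl hx
  -- step D
  set K : ℝ := 2 * l * (stdPhi x * stdPhi (l * x)) / ((1 + l ^ 2) * x) with hKdef
  have hK0 : 0 < K := by
    exact div_pos (mul_pos (by positivity) (mul_pos (stdPhi_pos x) (stdPhi_pos (l * x))))
      (by positivity)
  have hD : (∫ t in Set.Ioi x, 2 * l * stdPhi t * stdPhi (l * t)) ≤ K := by
    have hre : ∀ t : ℝ, 2 * l * stdPhi t * stdPhi (l * t)
        = (2 * l * (2 * Real.pi)⁻¹) * Real.exp (-((1 + l ^ 2) / 2) * t ^ 2) := fun t => by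
      rw [mul_assoc, phi_mul_phi]; ring
    have hc : (0:ℝ) < (1 + l ^ 2) / 2 := by positivity
    calc (∫ t in Set.Ioi x, 2 * l * stdPhi t * stdPhi (l * t))
        = (2 * l * (2 * Real.pi)⁻¹) * ∫ t in Set.Ioi x, Real.exp (-((1 + l ^ 2) / 2) * t ^ 2) := by
          simp only [hre]; exact MeasureTheory.integral_const_mul _ _
      _ ≤ (2 * l * (2 * Real.pi)⁻¹) *
          ((2 * ((1 + l ^ 2) / 2) * x)⁻¹ * Real.exp (-((1 + l ^ 2) / 2) * x ^ 2)) := by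
          apply mul_le_mul_of_nonneg_left (integral_exp_le _ x hc hx) (by positivity)
      _ = K := by
          rw [hKdef, phi_mul_phi l x]
          have hpi : (0:ℝ) < Real.pi := Real.pi_pos
          field_simp
  -- key strict inequality : K * (1 - q) < q * snPdf l x
  have hKey : K * (1 - q) < q * snPdf l x := by
    have hqf : q * snPdf l x = 2 * (stdPhi x * stdPhi (l * x)) * stdCdf (l * x) / (l * x) := by
      rw [hq]; unfold snPdf; field_simp
    rw [hqf, hKdef, div_mul_eq_mul_div, div_lt_div_iff₀ (by positivity) hy0]
    have hphis : 0 < stdPhi x * stdPhi (l * x) := mul_pos (stdPhi_pos x) (stdPhi_pos (l * x))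
    have hmain : l ^ 2 * (1 - q) < (1 + l ^ 2) * stdCdf (l * x) := by
      nlinarith [hPhiy, hq1, sq_nonneg l, mul_le_mul_of_nonneg_left hPhiy (by positivity : (0:ℝ) ≤ 1 + l ^ 2)]
    nlinarith [mul_pos hphis hx, mul_pos (mul_pos hphis hx) hy0,
      mul_lt_mul_of_pos_left hmain (mul_pos (mul_pos two_pos hphis) hx)]
  -- combine
  have hchain : A * (x * (1 - q)) < snPdf l x := by
    have h1 : x * A * (1 - q) ≤ (snPdf l x + K) * (1 - q) := by
      apply mul_le_mul_of_nonneg_right _ (by linarith)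
      calc x * A ≤ ∫ t in Set.Ioi x, t * snPdf l t := hB
        _ = snPdf l x + ∫ t in Set.Ioi x, 2 * l * stdPhi t * stdPhi (l * t) := hC
        _ ≤ snPdf l x + K := by linarith [hD]
    nlinarith [hKey]
  rw [hA, ← mul_inv, div_lt_iff₀ hfx, inv_mul_eq_div, lt_div_iff₀ (mul_pos hx (by linarith : (0:ℝ) < 1 - q))]
  linarith [hchain]
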